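/- For every n ≥ 2 and every subset A ⊆ {1, …, n−1}, the vector v_A is not a nonnegative integer combination of the vectors {v_B : B ⊆ {1, …, n−1}, B ≠ A}; equivalently, v_A does not lie in the additive submonoid of ℤ^n generated by H_n ∖ {v_A}. Hence H_n = {v_A : A ⊆ {1, …, n−1}} is the minimal generating set (Hilbert basis) of the monoid of lecture hall partitions. -/

import Mathlib

/-- A lecture hall partition of length `n`: a vector `λ ∈ ℤⁿ` (indexed `0,…,n-1`,
corresponding to `λ_1,…,λ_n`) with `0 ≤ λ_1` and `i·λ_{i+1} ≥ (i+1)·λ_i` for `1 ≤ i ≤ n-1`. -/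
def IsLectureHall (n : ℕ) (l : Fin n → ℤ) : Prop :=
  (∀ h : 0 < n, 0 ≤ l ⟨0, h⟩) ∧
  ∀ i : ℕ, ∀ h : i + 1 < n,
    ((i : ℤ) + 1) * l ⟨i + 1, h⟩ ≥ ((i : ℤ) + 2) * l ⟨i, by omega⟩

/-- For a subset `A = {i_1 < i_2 < ⋯ < i_k} ⊆ {1,…,n-1}`, the vector
`v_A = (0,…,0, i_1, i_2, …, i_k, i_k + 1) ∈ ℤⁿ`: `n - k - 1` leading zeros, then the
elements of `A` in increasing order, and finally `max(A) + 1` (with `v_∅ = (0,…,0,1)`). -/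
def vA (n : ℕ) (A : Finset ℕ) : Fin n → ℤ := fun j =>
  if (j : ℕ) = n - 1 then ((A.sort (· ≤ ·)).getLastD 0 : ℤ) + 1
  else if n - 1 - A.card ≤ (j : ℕ) then
    (((A.sort (· ≤ ·)).getD ((j : ℕ) - (n - 1 - A.card)) 0 : ℕ) : ℤ)
  else 0

lemma getD_length_sub_one (l : List ℕ) (d : ℕ) :
    l.getD (l.length - 1) d = l.getLastD d := by
  simp [List.getLastD_eq_getLast?, List.getLast?_eq_getElem?, List.getD]

/-- The functional `x ↦ x_{n-1} - x_{n-2}` evaluates to `1` on every generator `v_B`. -/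
lemma phi_vA (n : ℕ) (hn : 2 ≤ n) (B : Finset ℕ) (hB : B ⊆ Finset.Icc 1 (n - 1)) :
    vA n B ⟨n - 1, by omega⟩ - vA n B ⟨n - 2, by omega⟩ = 1 := by
  have hcard : B.card ≤ n - 1 := by
    have := Finset.card_le_card hB
    simpa [Nat.card_Icc] using this
  have hlen : (B.sort (· ≤ ·)).length = B.card := Finset.length_sort _
  show (if (n - 1 : ℕ) = n - 1 then ((B.sort (· ≤ ·)).getLastD 0 : ℤ) + 1
      else if n - 1 - B.card ≤ (n - 1 : ℕ) then
        (((B.sort (· ≤ ·)).getD ((n - 1) - (n - 1 - B.card)) 0 : ℕ) : ℤ)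
      else 0) -
    (if (n - 2 : ℕ) = n - 1 then ((B.sort (· ≤ ·)).getLastD 0 : ℤ) + 1
      else if n - 1 - B.card ≤ (n - 2 : ℕ) then
        (((B.sort (· ≤ ·)).getD ((n - 2) - (n - 1 - B.card)) 0 : ℕ) : ℤ)
      else 0) = 1
  rw [if_pos rfl, if_neg (by omega : ¬ (n - 2 : ℕ) = n - 1)]
  by_cases hk : B.card = 0
  · rw [if_neg (by omega)]
    have hnil : B.sort (· ≤ ·) = [] := List.length_eq_zero_iff.mp (by omega)
    simp [hnil]
  · rw [if_pos (by omega)]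
    have hsub : (n - 2) - (n - 1 - B.card) = (B.sort (· ≤ ·)).length - 1 := by omega
    rw [hsub, getD_length_sub_one]
    ring

/-- For every `n ≥ 2` and `A ⊆ {1,…,n-1}`, the vector `v_A` is not a nonnegative integer
combination of the other vectors `v_B` (`B ≠ A`): it does not lie in the additive
submonoid generated by `H_n ∖ {v_A}`. Hence `H_n` is the Hilbert basis of the monoid of
lecture hall partitions. -/
theorem vA_not_in_closure_of_others (n : ℕ) (hn : 2 ≤ n) (A : Finset ℕ)
    (hA : A ⊆ Finset.Icc 1 (n - 1)) :
    vA n A ∉ AddSubmonoid.closure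
      ({v : Fin n → ℤ | ∃ B : Finset ℕ, B ⊆ Finset.Icc 1 (n - 1) ∧ v = vA n B}
        \ {vA n A}) := by
  intro hmem
  set S : Set (Fin n → ℤ) :=
    {v : Fin n → ℤ | ∃ B : Finset ℕ, B ⊆ Finset.Icc 1 (n - 1) ∧ v = vA n B} \ {vA n A}
    with hS
  have h1 : n - 1 < n := by omega
  have h2 : n - 2 < n := by omega
  set φ : (Fin n → ℤ) → ℤ := fun x => x ⟨n - 1, h1⟩ - x ⟨n - 2, h2⟩ with hφ
  have key : ∀ x ∈ AddSubmonoid.closure S,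
      0 ≤ φ x ∧ (φ x = 0 → x = 0) ∧ (φ x = 1 → x ∈ S) := by
    intro x hx
    induction hx using AddSubmonoid.closure_induction with
    | mem s hs =>
      obtain ⟨⟨B, hB, hsB⟩, hne⟩ := hs
      have hval : φ s = 1 := by
        rw [hsB]; simp only [hφ]; exact phi_vA n hn B hB
      exact ⟨by rw [hval]; norm_num, by rw [hval]; norm_num,
        fun _ => ⟨⟨B, hB, hsB⟩, hne⟩⟩
    | zero =>
      refine ⟨le_refl 0, fun _ => rfl, fun h => ?_⟩
      simp [hφ] at h
    | add a b ha hb iha ihb =>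
      obtain ⟨ha0, ha1, ha2⟩ := iha
      obtain ⟨hb0, hb1, hb2⟩ := ihb
      have hadd : φ (a + b) = φ a + φ b := by simp [hφ]; ring
      refine ⟨by omega, fun h => ?_, fun h => ?_⟩
      · have : φ a = 0 ∧ φ b = 0 := by omega
        rw [ha1 this.1, hb1 this.2, add_zero]
      · rcases (by omega : φ a = 0 ∧ φ b = 1 ∨ φ a = 1 ∧ φ b = 0) with ⟨h0, h1'⟩ | ⟨h0, h1'⟩
        · rw [ha1 h0, zero_add]; exact hb2 h1'
        · rw [hb1 h1', add_zero]; exact ha2 h0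
  have := (key _ hmem).2.2 (phi_vA n hn A hA)
  exact this.2 rfl
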